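/- arXiv:1807.01500 — 2 statements merged into one kernel-verified Lean document; each statement's English description precedes it below -/
import Mathlib

section
/- For every integer L ≥ 3 and any two triples (a,b,c) and (a',b',c') of nonnegative integers with a + b + c = a' + b' + c' = L − 3, the braids w(a,b,c) and w(a',b',c') are conjugate in the braid group B_7. -/
/-- The Artin relations for the braid group on `n + 1` strands (with `n` generators
`σ_1, …, σ_n`, here indexed by `Fin n` via `σ_{i+1} ↔ i`). -/
def braidRels (n : ℕ) : Set (FreeGroup (Fin n)) :=
  { r | ∃ i j : Fin n,
      ((i : ℕ) + 1 = (j : ℕ) ∧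
        r = FreeGroup.of i * FreeGroup.of j * FreeGroup.of i *
            (FreeGroup.of j * FreeGroup.of i * FreeGroup.of j)⁻¹) ∨
      ((i : ℕ) + 2 ≤ (j : ℕ) ∧
        r = FreeGroup.of i * FreeGroup.of j * (FreeGroup.of j * FreeGroup.of i)⁻¹) }

/-- The braid group `B_7`, presented with generators `σ_1, …, σ_6` and the Artin
relations. -/
abbrev B7 : Type := PresentedGroup (braidRels 6)

/-- The Artin generator `σ_{i+1}` of `B_7` (so `s 0 = σ_1`, …, `s 5 = σ_6`). -/
def s (i : Fin 6) : B7 := PresentedGroup.of i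

/-- The braid `w(a,b,c) = (σ2σ1σ4σ6)·(σ1σ4σ6)^a·(σ1σ4σ3σ5σ6σ5)·(σ1σ3σ5)^b·
(σ5σ4σ3σ2σ1σ6)·(σ2σ4σ6)^c ∈ B_7`. -/
def w (a b c : ℕ) : B7 :=
  (s 1 * s 0 * s 3 * s 5) * (s 0 * s 3 * s 5) ^ a *
    (s 0 * s 3 * s 2 * s 4 * s 5 * s 4) * (s 0 * s 2 * s 4) ^ b *
    (s 4 * s 3 * s 2 * s 1 * s 0 * s 5) * (s 1 * s 3 * s 5) ^ c

lemma rel_one {r : FreeGroup (Fin 6)} (h : r ∈ braidRels 6) :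
    PresentedGroup.mk (braidRels 6) r = 1 :=
  (QuotientGroup.eq_one_iff _).mpr (Subgroup.subset_normalClosure h)

lemma sbraid (i j : Fin 6) (h : (i : ℕ) + 1 = j) :
    s i * s j * s i = s j * s i * s j := by
  have h1 := rel_one ⟨i, j, Or.inl ⟨h, rfl⟩⟩
  rw [map_mul, map_mul, map_inv, map_mul, map_mul, mul_inv_eq_one] at h1
  exact h1

lemma swE (i j : Fin 6) (h : (i : ℕ) + 2 ≤ j) : s i * s j = s j * s i := by
  have h1 := rel_one ⟨i, j, Or.inr ⟨h, rfl⟩⟩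
  rw [map_mul, map_inv, map_mul, mul_inv_eq_one] at h1
  exact h1

lemma scommute (i j : Fin 6) (h : (i : ℕ) + 2 ≤ j) : Commute (s i) (s j) := swE i j h

lemma step {u v u' v' : B7} (h : u * v = u' * v') (t : B7) :
    u * (v * t) = u' * (v' * t) := by
  rw [← mul_assoc, h, mul_assoc]

lemma step3 {u v t u' v' t' : B7} (h : u * v * t = u' * v' * t') (z : B7) :
    u * (v * (t * z)) = u' * (v' * (t' * z)) := by
  rw [← mul_assoc, ← mul_assoc, h, mul_assoc, mul_assoc]

lemma key1 (x y z : B7) (hx : x * s 3 = s 3 * x) (hy : y * s 2 = s 2 * y)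
    (hz : z * s 3 = s 3 * z) :
    s 1 * (s 0 * (s 3 * (s 5 * (x * (s 0 * (s 3 * (s 5 * (s 0 * (s 3 * (s 2 * (s 4 * (s 5 * (s 4 * (y * (s 4 * (s 3 * (s 2 * (s 1 * (s 0 * (s 5 * (z * (s 3)))))))))))))))))))))) = s 3 * (s 1 * (s 0 * (s 3 * (s 5 * (x * (s 0 * (s 3 * (s 2 * (s 4 * (s 5 * (s 4 * (s 0 * (s 2 * (s 4 * (y * (s 4 * (s 3 * (s 2 * (s 1 * (s 0 * (s 5 * (z)))))))))))))))))))))) := by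
  conv_lhs =>
    rw [hz]
    rw [step ((swE 3 5 (by decide)).symm) (z)]
    rw [step (swE 0 3 (by decide)) (s 5 * (z))]
    rw [step (swE 1 3 (by decide)) (s 0 * (s 5 * (z)))]
    rw [step3 ((sbraid 2 3 (by decide)).symm) (s 1 * (s 0 * (s 5 * (z))))]
    rw [step ((swE 2 4 (by decide)).symm) (s 3 * (s 2 * (s 1 * (s 0 * (s 5 * (z))))))]
    rw [step (hy) (s 4 * (s 3 * (s 2 * (s 1 * (s 0 * (s 5 * (z)))))))]
    rw [step ((swE 0 5 (by decide)).symm) (s 3 * (s 2 * (s 4 * (s 5 * (s 4 * (s 2 * (y * (s 4 * (s 3 * (s 2 * (s 1 * (s 0 * (s 5 * (z))))))))))))))]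
    rw [step ((swE 3 5 (by decide)).symm) (s 2 * (s 4 * (s 5 * (s 4 * (s 2 * (y * (s 4 * (s 3 * (s 2 * (s 1 * (s 0 * (s 5 * (z)))))))))))))]
    rw [step ((swE 2 5 (by decide)).symm) (s 4 * (s 5 * (s 4 * (s 2 * (y * (s 4 * (s 3 * (s 2 * (s 1 * (s 0 * (s 5 * (z))))))))))))]
    rw [step3 ((sbraid 4 5 (by decide)).symm) (s 4 * (s 2 * (y * (s 4 * (s 3 * (s 2 * (s 1 * (s 0 * (s 5 * (z))))))))))]
    rw [step ((swE 2 4 (by decide)).symm) (y * (s 4 * (s 3 * (s 2 * (s 1 * (s 0 * (s 5 * (z))))))))]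
    rw [step ((swE 2 4 (by decide)).symm) (s 4 * (y * (s 4 * (s 3 * (s 2 * (s 1 * (s 0 * (s 5 * (z)))))))))]
    rw [step ((swE 2 5 (by decide)).symm) (s 4 * (s 4 * (y * (s 4 * (s 3 * (s 2 * (s 1 * (s 0 * (s 5 * (z))))))))))]
    rw [step ((swE 2 4 (by decide)).symm) (s 5 * (s 4 * (s 4 * (y * (s 4 * (s 3 * (s 2 * (s 1 * (s 0 * (s 5 * (z)))))))))))]
    rw [step (swE 0 3 (by decide)) (s 0 * (s 3 * (s 2 * (s 2 * (s 4 * (s 5 * (s 4 * (s 4 * (y * (s 4 * (s 3 * (s 2 * (s 1 * (s 0 * (s 5 * (z))))))))))))))))]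
    rw [step (swE 0 3 (by decide)) (s 2 * (s 2 * (s 4 * (s 5 * (s 4 * (s 4 * (y * (s 4 * (s 3 * (s 2 * (s 1 * (s 0 * (s 5 * (z))))))))))))))]
    rw [step (hx) (s 0 * (s 3 * (s 0 * (s 2 * (s 2 * (s 4 * (s 5 * (s 4 * (s 4 * (y * (s 4 * (s 3 * (s 2 * (s 1 * (s 0 * (s 5 * (z)))))))))))))))))]
    rw [step ((swE 3 5 (by decide)).symm) (x * (s 0 * (s 3 * (s 0 * (s 2 * (s 2 * (s 4 * (s 5 * (s 4 * (s 4 * (y * (s 4 * (s 3 * (s 2 * (s 1 * (s 0 * (s 5 * (z))))))))))))))))))]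
    rw [step (swE 0 3 (by decide)) (s 3 * (s 5 * (x * (s 0 * (s 3 * (s 0 * (s 2 * (s 2 * (s 4 * (s 5 * (s 4 * (s 4 * (y * (s 4 * (s 3 * (s 2 * (s 1 * (s 0 * (s 5 * (z))))))))))))))))))))]
    rw [step (swE 1 3 (by decide)) (s 0 * (s 3 * (s 5 * (x * (s 0 * (s 3 * (s 0 * (s 2 * (s 2 * (s 4 * (s 5 * (s 4 * (s 4 * (y * (s 4 * (s 3 * (s 2 * (s 1 * (s 0 * (s 5 * (z)))))))))))))))))))))]
  conv_rhs =>
    rw [step ((swE 0 4 (by decide)).symm) (s 2 * (s 4 * (y * (s 4 * (s 3 * (s 2 * (s 1 * (s 0 * (s 5 * (z))))))))))]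
    rw [step ((swE 0 5 (by decide)).symm) (s 4 * (s 2 * (s 4 * (y * (s 4 * (s 3 * (s 2 * (s 1 * (s 0 * (s 5 * (z)))))))))))]
    rw [step ((swE 0 4 (by decide)).symm) (s 5 * (s 4 * (s 2 * (s 4 * (y * (s 4 * (s 3 * (s 2 * (s 1 * (s 0 * (s 5 * (z))))))))))))]
    rw [step ((swE 0 2 (by decide)).symm) (s 4 * (s 5 * (s 4 * (s 2 * (s 4 * (y * (s 4 * (s 3 * (s 2 * (s 1 * (s 0 * (s 5 * (z)))))))))))))]
    rw [step ((swE 2 4 (by decide)).symm) (s 4 * (y * (s 4 * (s 3 * (s 2 * (s 1 * (s 0 * (s 5 * (z)))))))))]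
    rw [step ((swE 2 5 (by decide)).symm) (s 4 * (s 4 * (y * (s 4 * (s 3 * (s 2 * (s 1 * (s 0 * (s 5 * (z))))))))))]
    rw [step ((swE 2 4 (by decide)).symm) (s 5 * (s 4 * (s 4 * (y * (s 4 * (s 3 * (s 2 * (s 1 * (s 0 * (s 5 * (z)))))))))))]

lemma key2 (x y z : B7) (hx : x * s 5 = s 5 * x) (hy : y * s 4 = s 4 * y)
    (hz : z * s 5 = s 5 * z) :
    s 1 * (s 0 * (s 3 * (s 5 * (x * (s 0 * (s 3 * (s 2 * (s 4 * (s 5 * (s 4 * (y * (s 0 * (s 2 * (s 4 * (s 4 * (s 3 * (s 2 * (s 1 * (s 0 * (s 5 * (z * (s 5)))))))))))))))))))))) = s 5 * (s 1 * (s 0 * (s 3 * (s 5 * (x * (s 0 * (s 3 * (s 2 * (s 4 * (s 5 * (s 4 * (y * (s 4 * (s 3 * (s 2 * (s 1 * (s 0 * (s 5 * (s 1 * (s 3 * (s 5 * (z)))))))))))))))))))))) := by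
  conv_lhs =>
    rw [hz]
  conv_rhs =>
    rw [step ((swE 1 5 (by decide)).symm) (s 0 * (s 3 * (s 5 * (x * (s 0 * (s 3 * (s 2 * (s 4 * (s 5 * (s 4 * (y * (s 4 * (s 3 * (s 2 * (s 1 * (s 0 * (s 5 * (s 1 * (s 3 * (s 5 * (z)))))))))))))))))))))]
    rw [step ((swE 0 5 (by decide)).symm) (s 3 * (s 5 * (x * (s 0 * (s 3 * (s 2 * (s 4 * (s 5 * (s 4 * (y * (s 4 * (s 3 * (s 2 * (s 1 * (s 0 * (s 5 * (s 1 * (s 3 * (s 5 * (z))))))))))))))))))))]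
    rw [step ((swE 3 5 (by decide)).symm) (s 5 * (x * (s 0 * (s 3 * (s 2 * (s 4 * (s 5 * (s 4 * (y * (s 4 * (s 3 * (s 2 * (s 1 * (s 0 * (s 5 * (s 1 * (s 3 * (s 5 * (z)))))))))))))))))))]
    rw [step (hx.symm) (s 0 * (s 3 * (s 2 * (s 4 * (s 5 * (s 4 * (y * (s 4 * (s 3 * (s 2 * (s 1 * (s 0 * (s 5 * (s 1 * (s 3 * (s 5 * (z)))))))))))))))))]
    rw [step ((swE 0 5 (by decide)).symm) (s 3 * (s 2 * (s 4 * (s 5 * (s 4 * (y * (s 4 * (s 3 * (s 2 * (s 1 * (s 0 * (s 5 * (s 1 * (s 3 * (s 5 * (z))))))))))))))))]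
    rw [step ((swE 3 5 (by decide)).symm) (s 2 * (s 4 * (s 5 * (s 4 * (y * (s 4 * (s 3 * (s 2 * (s 1 * (s 0 * (s 5 * (s 1 * (s 3 * (s 5 * (z)))))))))))))))]
    rw [step ((swE 2 5 (by decide)).symm) (s 4 * (s 5 * (s 4 * (y * (s 4 * (s 3 * (s 2 * (s 1 * (s 0 * (s 5 * (s 1 * (s 3 * (s 5 * (z))))))))))))))]
    rw [step3 ((sbraid 4 5 (by decide)).symm) (s 4 * (y * (s 4 * (s 3 * (s 2 * (s 1 * (s 0 * (s 5 * (s 1 * (s 3 * (s 5 * (z))))))))))))]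
    rw [step (hy.symm) (s 4 * (s 3 * (s 2 * (s 1 * (s 0 * (s 5 * (s 1 * (s 3 * (s 5 * (z))))))))))]
    rw [step ((swE 1 5 (by decide)).symm) (s 3 * (s 5 * (z)))]
    rw [step3 ((sbraid 0 1 (by decide)).symm) (s 5 * (s 3 * (s 5 * (z))))]
    rw [step ((swE 0 2 (by decide)).symm) (s 1 * (s 0 * (s 5 * (s 3 * (s 5 * (z))))))]
    rw [step ((swE 0 3 (by decide)).symm) (s 2 * (s 1 * (s 0 * (s 5 * (s 3 * (s 5 * (z)))))))]
    rw [step ((swE 0 4 (by decide)).symm) (s 3 * (s 2 * (s 1 * (s 0 * (s 5 * (s 3 * (s 5 * (z))))))))]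
    rw [step ((swE 0 4 (by decide)).symm) (s 4 * (s 3 * (s 2 * (s 1 * (s 0 * (s 5 * (s 3 * (s 5 * (z)))))))))]
    rw [step ((swE 3 5 (by decide)).symm) (s 5 * (z))]
    rw [step (swE 0 3 (by decide)) (s 5 * (s 5 * (z)))]
    rw [step (swE 1 3 (by decide)) (s 0 * (s 5 * (s 5 * (z))))]
    rw [step3 ((sbraid 2 3 (by decide)).symm) (s 1 * (s 0 * (s 5 * (s 5 * (z)))))]
    rw [step ((swE 2 4 (by decide)).symm) (s 3 * (s 2 * (s 1 * (s 0 * (s 5 * (s 5 * (z)))))))]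
    rw [step ((swE 2 4 (by decide)).symm) (s 4 * (s 3 * (s 2 * (s 1 * (s 0 * (s 5 * (s 5 * (z))))))))]

lemma L1 (a b c : ℕ) : w (a + 1) b c * s 3 = s 3 * w a (b + 1) c := by
  have hx : Commute (s 3) ((s 0 * (s 3 * s 5)) ^ a) :=
    (((scommute 0 3 (by decide)).symm).mul_right
      ((Commute.refl _).mul_right (scommute 3 5 (by decide)))).pow_right a
  have hy : Commute (s 2) ((s 0 * (s 2 * s 4)) ^ b) :=
    (((scommute 0 2 (by decide)).symm).mul_right
      ((Commute.refl _).mul_right (scommute 2 4 (by decide)))).pow_right b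
  have hz : Commute (s 3) ((s 1 * (s 3 * s 5)) ^ c) :=
    (((scommute 1 3 (by decide)).symm).mul_right
      ((Commute.refl _).mul_right (scommute 3 5 (by decide)))).pow_right c
  simp only [w]
  rw [pow_succ (s 0 * s 3 * s 5) a, pow_succ' (s 0 * s 2 * s 4) b]
  simp only [mul_assoc]
  exact key1 _ _ _ hx.symm.eq hy.symm.eq hz.symm.eq

lemma L2 (a b c : ℕ) : w a (b + 1) c * s 5 = s 5 * w a b (c + 1) := by
  have hx : Commute (s 5) ((s 0 * (s 3 * s 5)) ^ a) :=
    (((scommute 0 5 (by decide)).symm).mul_right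
      (((scommute 3 5 (by decide)).symm).mul_right (Commute.refl _))).pow_right a
  have hy : Commute (s 4) ((s 0 * (s 2 * s 4)) ^ b) :=
    (((scommute 0 4 (by decide)).symm).mul_right
      (((scommute 2 4 (by decide)).symm).mul_right (Commute.refl _))).pow_right b
  have hz : Commute (s 5) ((s 1 * (s 3 * s 5)) ^ c) :=
    (((scommute 1 5 (by decide)).symm).mul_right
      (((scommute 3 5 (by decide)).symm).mul_right (Commute.refl _))).pow_right c
  simp only [w]
  rw [pow_succ (s 0 * s 2 * s 4) b, pow_succ' (s 1 * s 3 * s 5) c]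
  simp only [mul_assoc]
  exact key2 _ _ _ hx.symm.eq hy.symm.eq hz.symm.eq

lemma conj1 (a b c : ℕ) : IsConj (w (a + 1) b c) (w a (b + 1) c) :=
  isConj_iff.mpr ⟨(s 3)⁻¹, by
    rw [inv_inv, mul_assoc, L1 a b c, inv_mul_cancel_left]⟩

lemma conj2 (a b c : ℕ) : IsConj (w a (b + 1) c) (w a b (c + 1)) :=
  isConj_iff.mpr ⟨(s 5)⁻¹, by
    rw [inv_inv, mul_assoc, L2 a b c, inv_mul_cancel_left]⟩

lemma collapse_b : ∀ b a c : ℕ, IsConj (w a b c) (w (a + b) 0 c) := by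
  intro b
  induction b with
  | zero => intro a c; rw [Nat.add_zero]
  | succ b ih =>
    intro a c
    have h := (conj1 a b c).symm.trans (ih (a + 1) c)
    rwa [show a + 1 + b = a + (b + 1) by omega] at h

lemma collapse_c : ∀ c a b : ℕ, IsConj (w a b c) (w a (b + c) 0) := by
  intro c
  induction c with
  | zero => intro a b; rw [Nat.add_zero]
  | succ c ih =>
    intro a b
    have h := (conj2 a b c).symm.trans (ih a (b + 1))
    rwa [show b + 1 + c = b + (c + 1) by omega] at h

lemma wnorm (a b c : ℕ) : IsConj (w a b c) (w (a + b + c) 0 0) := by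
  have h := (collapse_c c a b).trans (collapse_b (b + c) a 0)
  rwa [show a + (b + c) = a + b + c by omega] at h

/-- For every `L ≥ 3` and any two triples of nonnegative integers summing to `L - 3`,
the braids `w(a,b,c)` and `w(a',b',c')` are conjugate in `B_7`. -/
theorem w_conj_w (L a b c a' b' c' : ℕ) (hL : 3 ≤ L)
    (habc : a + b + c = L - 3) (habc' : a' + b' + c' = L - 3) :
    ∃ g : B7, g * w a b c * g⁻¹ = w a' b' c' := by
  have e : a + b + c = a' + b' + c' := by omega
  have h2 := (wnorm a' b' c').symm
  rw [← e] at h2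
  exact isConj_iff.mp ((wnorm a b c).trans h2)
end

section
/- For every integer L ≥ 3, the map (a,b,c) ↦ w(a,b,c) is injective on the set of triples of nonnegative integers with a + b + c = L − 3: if w(a,b,c) = w(a',b',c') in B_7 with a + b + c = a' + b' + c' = L − 3, then (a,b,c) = (a',b',c'). -/
set_option maxHeartbeats 4000000

namespace BraidAux

abbrev M := Matrix (Fin 7) (Fin 7) ℤ

def σm (i : Fin 6) : M := fun p q =>
  if p = i.castSucc ∧ q = i.castSucc then 2
  else if p = i.castSucc ∧ q = i.succ then -1
  else if p = i.succ ∧ q = i.castSucc then 1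
  else if p = i.succ ∧ q = i.succ then 0
  else if p = q then 1 else 0

def τm (i : Fin 6) : M := fun p q =>
  if p = i.castSucc ∧ q = i.castSucc then 0
  else if p = i.castSucc ∧ q = i.succ then 1
  else if p = i.succ ∧ q = i.castSucc then -1
  else if p = i.succ ∧ q = i.succ then 2
  else if p = q then 1 else 0

def Am : M :=
  !![2, (-1), 0, 0, 0, 0, 0;
   2, 0, (-1), 0, 0, 0, 0;
   1, 0, 0, 0, 0, 0, 0;
   0, 0, 0, 2, (-1), 0, 0;
   0, 0, 0, 1, 0, 0, 0;
   0, 0, 0, 0, 0, 2, (-1);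
   0, 0, 0, 0, 0, 1, 0]
def Bm : M :=
  !![2, (-1), 0, 0, 0, 0, 0;
   1, 0, 0, 0, 0, 0, 0;
   0, 0, 2, (-1), 0, 0, 0;
   0, 0, 2, 0, (-2), 2, (-1);
   0, 0, 1, 0, 0, 0, 0;
   0, 0, 0, 0, 2, (-1), 0;
   0, 0, 0, 0, 1, 0, 0]
def Cm : M :=
  !![2, (-1), 0, 0, 0, 0, 0;
   2, 0, (-1), 0, 0, 0, 0;
   2, 0, 0, (-1), 0, 0, 0;
   2, 0, 0, 0, (-1), 0, 0;
   2, 0, 0, 0, 0, (-2), 1;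
   1, 0, 0, 0, 0, 0, 0;
   0, 0, 0, 0, 0, 1, 0]
def Exm : M :=
  !![1, (-1), 0, 0, 0, 0, 0;
   1, (-1), 0, 0, 0, 0, 0;
   0, 0, 0, 0, 0, 0, 0;
   0, 0, 0, 1, (-1), 0, 0;
   0, 0, 0, 1, (-1), 0, 0;
   0, 0, 0, 0, 0, 1, (-1);
   0, 0, 0, 0, 0, 1, (-1)]
def Eym : M :=
  !![1, (-1), 0, 0, 0, 0, 0;
   1, (-1), 0, 0, 0, 0, 0;
   0, 0, 1, (-1), 0, 0, 0;
   0, 0, 1, (-1), 0, 0, 0;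
   0, 0, 0, 0, 1, (-1), 0;
   0, 0, 0, 0, 1, (-1), 0;
   0, 0, 0, 0, 0, 0, 0]
def Ezm : M :=
  !![0, 0, 0, 0, 0, 0, 0;
   0, 1, (-1), 0, 0, 0, 0;
   0, 1, (-1), 0, 0, 0, 0;
   0, 0, 0, 1, (-1), 0, 0;
   0, 0, 0, 1, (-1), 0, 0;
   0, 0, 0, 0, 0, 1, (-1);
   0, 0, 0, 0, 0, 1, (-1)]
def K0m : M :=
  !![2, (-3), 2, 0, 0, 0, 0;
   2, (-4), 2, 2, (-1), 0, 0;
   2, (-2), 1, 0, 0, 0, 0;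
   2, 0, 0, (-3), 0, 6, (-4);
   2, 0, 0, (-2), 0, 3, (-2);
   4, 0, 0, 0, 0, (-6), 3;
   3, 0, 0, 0, 0, (-4), 2]
def K1m : M :=
  !![0, (-1), 1, 0, 0, 0, 0;
   0, (-2), 2, 0, 0, 0, 0;
   0, (-1), 1, 0, 0, 0, 0;
   0, 0, 0, (-1), 0, 3, (-2);
   0, 0, 0, (-1), 0, 3, (-2);
   1, 0, 0, 0, 0, (-2), 1;
   1, 0, 0, 0, 0, (-2), 1]
def K2m : M :=
  !![0, (-1), 1, 0, 0, 0, 0;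
   0, (-2), 2, 1, (-1), 0, 0;
   0, (-1), 1, 0, 0, 0, 0;
   0, 0, 0, (-3), 3, 0, 0;
   0, 0, 0, (-2), 2, 0, 0;
   1, 0, 0, 0, 0, (-2), 1;
   1, 0, 0, 0, 0, (-2), 1]
def K3m : M :=
  !![0, (-1), 1, 0, 0, 0, 0;
   0, (-2), 2, 1, (-1), 0, 0;
   0, (-1), 1, 0, 0, 0, 0;
   0, 0, 0, (-3), 3, 2, (-2);
   0, 0, 0, (-2), 2, 1, (-1);
   0, 0, 0, 0, 0, (-3), 3;
   0, 0, 0, 0, 0, (-2), 2]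
def K4m : M :=
  !![0, 0, 0, 0, 0, 0, 0;
   0, 0, 0, 0, 0, 0, 0;
   0, 0, 0, 0, 0, 0, 0;
   0, 0, 0, (-1), 1, 0, 0;
   0, 0, 0, (-1), 1, 0, 0;
   0, 0, 0, 0, 0, 0, 0;
   0, 0, 0, 0, 0, 0, 0]
def K5m : M :=
  !![0, 0, 0, 0, 0, 0, 0;
   0, 0, 0, 0, 0, 0, 0;
   0, 0, 0, 0, 0, 0, 0;
   0, 0, 0, (-1), 1, 1, (-1);
   0, 0, 0, (-1), 1, 1, (-1);
   0, 0, 0, 0, 0, (-1), 1;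
   0, 0, 0, 0, 0, (-1), 1]
def K6m : M :=
  !![0, 0, 0, 0, 0, 0, 0;
   0, 0, 0, 0, 0, 0, 0;
   0, 0, 0, 0, 0, 0, 0;
   0, 0, 0, 0, 0, 0, 0;
   0, 0, 0, 0, 0, 0, 0;
   0, 0, 0, 0, 0, (-1), 1;
   0, 0, 0, 0, 0, (-1), 1]
def K7m : M :=
  !![0, 0, 0, 0, 0, 0, 0;
   0, 0, 0, 0, 0, 0, 0;
   0, 0, 0, 0, 0, 0, 0;
   0, 0, 0, 0, 0, 0, 0;
   0, 0, 0, 0, 0, 0, 0;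
   0, 0, 0, 0, 0, 0, 0;
   0, 0, 0, 0, 0, 0, 0]

def σu (i : Fin 6) : Mˣ :=
  ⟨σm i, τm i, by fin_cases i <;> decide, by fin_cases i <;> decide⟩

lemma val_σu (i : Fin 6) : ((σu i : Mˣ) : M) = σm i := rfl

lemma rels_hold : ∀ r ∈ braidRels 6, FreeGroup.lift σu r = 1 := by
  rintro r ⟨i, j, (⟨hij, rfl⟩ | ⟨hij, rfl⟩)⟩ <;>
  · simp only [map_mul, map_inv, FreeGroup.lift_apply_of, mul_inv_eq_one]
    rw [Units.ext_iff]
    simp only [Units.val_mul, val_σu]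
    revert hij
    fin_cases i <;> fin_cases j <;> decide

def ρ : B7 →* Mˣ := PresentedGroup.toGroup rels_hold

lemma ρ_s (i : Fin 6) : ρ (s i) = σu i := PresentedGroup.toGroup.of rels_hold

lemma one_add_pow (N : M) (h : N * N = 0) (n : ℕ) :
    (1 + N) ^ n = 1 + (n : ℤ) • N := by
  induction n with
  | zero => simp
  | succ n ih =>
      rw [pow_succ, ih]
      simp only [mul_add, add_mul, mul_one, one_mul, smul_mul_assoc, h,
        smul_zero, add_zero]
      push_cast
      rw [add_smul, one_smul]
      abel

lemma hExm : Exm * Exm = 0 := by decide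
lemma hEym : Eym * Eym = 0 := by decide
lemma hEzm : Ezm * Ezm = 0 := by decide
lemma hX1 : σm 0 * σm 3 * σm 5 = 1 + Exm := by decide
lemma hY1 : σm 0 * σm 2 * σm 4 = 1 + Eym := by decide
lemma hZ1 : σm 1 * σm 3 * σm 5 = 1 + Ezm := by decide
lemma hA : σm 1 * σm 0 * σm 3 * σm 5 = Am := by decide
lemma hB : σm 0 * σm 3 * σm 2 * σm 4 * σm 5 * σm 4 = Bm := by decide
lemma hC : σm 4 * σm 3 * σm 2 * σm 1 * σm 0 * σm 5 = Cm := by decide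

lemma expand (x y z : ℤ) :
    Am * (1 + x • Exm) * Bm * (1 + y • Eym) * Cm * (1 + z • Ezm) =
      K0m + x • K1m + y • K2m + z • K3m + (x * y) • K4m + (x * z) • K5m +
        (y * z) • K6m + (x * y * z) • K7m := by
  have e0 : Am * Bm * Cm = K0m := by decide
  have e1 : Am * Exm * Bm * Cm = K1m := by decide
  have e2 : Am * Bm * Eym * Cm = K2m := by decide
  have e3 : Am * Bm * Cm * Ezm = K3m := by decide
  have e4 : Am * Exm * Bm * Eym * Cm = K4m := by decide
  have e5 : Am * Exm * Bm * Cm * Ezm = K5m := by decide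
  have e6 : Am * Bm * Eym * Cm * Ezm = K6m := by decide
  have e7 : Am * Exm * Bm * Eym * Cm * Ezm = K7m := by decide
  simp only [mul_add, add_mul, mul_one, one_mul, smul_mul_assoc, mul_smul_comm,
    smul_smul]
  rw [e4, e0, e1, e2, (by decide : K0m * Ezm = K3m), (by decide : K1m * Ezm = K5m),
    (by decide : K2m * Ezm = K6m), (by decide : K4m * Ezm = K7m)]
  match_scalars <;> ring

lemma key (a b c : ℕ) :
    ((ρ (w a b c) : Mˣ) : M) =
      K0m + (a : ℤ) • K1m + (b : ℤ) • K2m + (c : ℤ) • K3m +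
        ((a : ℤ) * b) • K4m + ((a : ℤ) * c) • K5m + ((b : ℤ) * c) • K6m +
        ((a : ℤ) * b * c) • K7m := by
  rw [w]
  simp only [map_mul, map_pow, ρ_s, Units.val_mul, Units.val_pow_eq_pow_val, val_σu]
  rw [hX1, hY1, hZ1, one_add_pow Exm hExm, one_add_pow Eym hEym, one_add_pow Ezm hEzm,
    hA, hB, hC, expand]

end BraidAux

/-- For every `L ≥ 3`, the map `(a,b,c) ↦ w(a,b,c)` is injective on triples of
nonnegative integers with `a + b + c = L - 3`. -/
theorem w_injective (L a b c a' b' c' : ℕ) (hL : 3 ≤ L)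
    (habc : a + b + c = L - 3) (habc' : a' + b' + c' = L - 3)
    (hw : w a b c = w a' b' c') :
    (a, b, c) = (a', b', c') := by
  classical
  have h := congrArg (fun g => ((BraidAux.ρ g : BraidAux.Mˣ) : BraidAux.M)) hw
  simp only [BraidAux.key] at h
  have h13 := congrFun (congrFun h 1) 3
  have h50 := congrFun (congrFun h 5) 0
  have h02 := congrFun (congrFun h 0) 2
  simp only [Matrix.add_apply, Matrix.smul_apply, smul_eq_mul] at h13 h50 h02
  rw [ (by decide : BraidAux.K0m 1 3 = 2), (by decide : BraidAux.K1m 1 3 = 0),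
    (by decide : BraidAux.K2m 1 3 = 1), (by decide : BraidAux.K3m 1 3 = 1),
    (by decide : BraidAux.K4m 1 3 = 0), (by decide : BraidAux.K5m 1 3 = 0),
    (by decide : BraidAux.K6m 1 3 = 0), (by decide : BraidAux.K7m 1 3 = 0)] at h13
  rw [ (by decide : BraidAux.K0m 5 0 = 4), (by decide : BraidAux.K1m 5 0 = 1),
    (by decide : BraidAux.K2m 5 0 = 1), (by decide : BraidAux.K3m 5 0 = 0),
    (by decide : BraidAux.K4m 5 0 = 0), (by decide : BraidAux.K5m 5 0 = 0),
    (by decide : BraidAux.K6m 5 0 = 0), (by decide : BraidAux.K7m 5 0 = 0)] at h50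
  rw [ (by decide : BraidAux.K0m 0 2 = 2), (by decide : BraidAux.K1m 0 2 = 1),
    (by decide : BraidAux.K2m 0 2 = 1), (by decide : BraidAux.K3m 0 2 = 1),
    (by decide : BraidAux.K4m 0 2 = 0), (by decide : BraidAux.K5m 0 2 = 0),
    (by decide : BraidAux.K6m 0 2 = 0), (by decide : BraidAux.K7m 0 2 = 0)] at h02
  simp only [mul_zero, mul_one, add_zero] at h13 h50 h02
  have e1 : (b : ℤ) + c = (b' : ℤ) + c' := by linarith
  have e2 : (a : ℤ) + b = (a' : ℤ) + b' := by linarith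
  have e3 : (a : ℤ) + b + c = (a' : ℤ) + b' + c' := by linarith
  have : a = a' ∧ b = b' ∧ c = c' := by omega
  simp [this.1, this.2.1, this.2.2]
end
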